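/- Define the map from partitions of a to integer sequences by sending a partition λ (with Young diagram Y) to the sequence s(n) = (length of the n-th diagonal of Y), i.e., s(n) = #{(i,j) ∈ Y : j − i = n} for n ∈ ℤ, where Y = {(i,j) : 1 ≤ i ≤ number of parts, 1 ≤ j ≤ λ_i}. Then s is 1-admissible with ∑_n s(n) = a, i.e., s(n+1) ∈ {s(n), s(n)−1} and s(−n−1) ∈ {s(−n), s(−n)−1} for all n ≥ 0, and the total sum of diagonal lengths equals a. -/

import Mathlib

/-- `s` is 1-admissible: away from index 0 in each direction, consecutive values
drop by 0 or 1 (truncated subtraction on ℕ). -/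
def IsOneAdmissible (s : ℤ → ℕ) : Prop :=
  ∀ n : ℕ, (s ((n : ℤ) + 1) = s n ∨ s ((n : ℤ) + 1) = s n - 1) ∧
    (s (-(n : ℤ) - 1) = s (-(n : ℤ)) ∨ s (-(n : ℤ) - 1) = s (-(n : ℤ)) - 1)

/-- The sequence of diagonal lengths of the Young diagram of a partition `λ`:
`s(n) = #{(i, j) ∈ Y : j − i = n}` where
`Y = {(i, j) : 1 ≤ i ≤ number of parts, 1 ≤ j ≤ λᵢ}` and the parts `λᵢ` are
listed in weakly decreasing order.  Row `i` (1-indexed) contributes to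
diagonal `n` iff `1 ≤ n + i ≤ λᵢ`. -/
noncomputable def diagSeq {a : ℕ} (P : Nat.Partition a) : ℤ → ℕ := fun n =>
  ((Finset.range ((P.parts.sort (· ≤ ·)).reverse.length)).filter (fun (i : ℕ) =>
      1 ≤ n + ((i : ℤ) + 1) ∧
        n + ((i : ℤ) + 1) ≤ (((P.parts.sort (· ≤ ·)).reverse.getD i 0 : ℕ) : ℤ))).card

section Aux

open Finset

/-- The filter set whose cardinality is `diagSeq`. -/
noncomputable def diagA (L : List ℕ) (m : ℤ) : Finset ℕ :=
  (Finset.range L.length).filter (fun (i : ℕ) =>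
      1 ≤ m + ((i : ℤ) + 1) ∧ m + ((i : ℤ) + 1) ≤ ((L.getD i 0 : ℕ) : ℤ))

/-- Auxiliary filter set for the negative side. -/
noncomputable def diagB (L : List ℕ) (m : ℕ) : Finset ℕ :=
  (Finset.range L.length).filter (fun i : ℕ => 1 - (m : ℤ) ≤ ((L.getD i 0 : ℕ) : ℤ) - i)

lemma mem_diagA {L : List ℕ} {m : ℤ} {i : ℕ} :
    i ∈ diagA L m ↔ i < L.length ∧ 1 ≤ m + ((i : ℤ) + 1) ∧
      m + ((i : ℤ) + 1) ≤ ((L.getD i 0 : ℕ) : ℤ) := by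
  simp [diagA]

lemma card_diag_eq_le_one (L : List ℕ)
    (hanti : ∀ i j : ℕ, i ≤ j → j < L.length → L.getD j 0 ≤ L.getD i 0) (c : ℤ) :
    (((Finset.range L.length)).filter
      (fun i : ℕ => ((L.getD i 0 : ℕ) : ℤ) - i = c)).card ≤ 1 := by
  rw [Finset.card_le_one]
  intro i hi j hj
  simp only [Finset.mem_filter, Finset.mem_range] at hi hj
  rcases lt_trichotomy i j with h | h | h
  · have := hanti i j h.le hj.1
    omega
  · exact h
  · have := hanti j i h.le hi.1
    omega

lemma aux_admissible (L : List ℕ)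
    (hpos : ∀ i : ℕ, i < L.length → 1 ≤ L.getD i 0)
    (hanti : ∀ i j : ℕ, i ≤ j → j < L.length → L.getD j 0 ≤ L.getD i 0) :
    IsOneAdmissible (fun n => (diagA L n).card) := by
  intro n
  set k := L.length with hk
  constructor
  all_goals dsimp only
  · -- positive side
    have hsub : diagA L ((n : ℤ) + 1) ⊆ diagA L n := by
      intro i hi
      rw [mem_diagA] at hi ⊢
      refine ⟨hi.1, by omega, by omega⟩
    have hdiff : diagA L n \ diagA L ((n : ℤ) + 1) ⊆
        (Finset.range k).filter (fun i : ℕ => ((L.getD i 0 : ℕ) : ℤ) - i = (n : ℤ) + 1) := by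
      intro i hi
      rw [Finset.mem_sdiff, mem_diagA, mem_diagA] at hi
      simp only [Finset.mem_filter, Finset.mem_range]
      obtain ⟨⟨h1, h2, h3⟩, h4⟩ := hi
      refine ⟨h1, ?_⟩
      by_contra hne
      exact h4 ⟨h1, by omega, by omega⟩
    have h1 := Finset.card_sdiff_add_card_eq_card hsub
    have h2 : (diagA L n \ diagA L ((n : ℤ) + 1)).card ≤ 1 :=
      le_trans (Finset.card_le_card hdiff) (card_diag_eq_le_one L hanti _)
    omega
  · -- negative side
    have key : ∀ m : ℕ, (diagA L (-(m : ℤ))).card + min m k = (diagB L m).card := by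
      intro m
      have hunion : diagB L m =
          diagA L (-(m : ℤ)) ∪ Finset.range (min m k) := by
        rw [diagB]
        ext i
        simp only [Finset.mem_filter, Finset.mem_range, Finset.mem_union, mem_diagA,
          lt_min_iff]
        by_cases hik : i < k
        · have := hpos i hik
          constructor
          · rintro ⟨-, hc⟩
            by_cases him : i < m
            · exact Or.inr ⟨him, hik⟩
            · exact Or.inl ⟨hik, by omega, by omega⟩
          · rintro (⟨-, h1, h2⟩ | ⟨h1, -⟩)
            · exact ⟨hik, by omega⟩
            · exact ⟨hik, by omega⟩
        · constructor
          · rintro ⟨h, -⟩; exact absurd h hik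
          · rintro (⟨h, -⟩ | ⟨-, h⟩) <;> exact absurd h hik
      have hdisj : Disjoint (diagA L (-(m : ℤ))) (Finset.range (min m k)) := by
        rw [Finset.disjoint_left]
        intro i hi hi'
        rw [mem_diagA] at hi
        rw [Finset.mem_range, lt_min_iff] at hi'
        omega
      rw [hunion, Finset.card_union_of_disjoint hdisj, Finset.card_range]
    have hsub : diagB L n ⊆ diagB L (n + 1) := by
      intro i hi
      simp only [diagB, Finset.mem_filter, Finset.mem_range] at hi ⊢
      push_cast
      push_cast at hi
      exact ⟨hi.1, by omega⟩
    have hdiff : diagB L (n + 1) \ diagB L n ⊆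
        (Finset.range L.length).filter (fun i : ℕ => ((L.getD i 0 : ℕ) : ℤ) - i = -(n : ℤ)) := by
      intro i hi
      simp only [diagB, Finset.mem_sdiff, Finset.mem_filter, Finset.mem_range, not_and, not_le] at hi
      simp only [Finset.mem_filter, Finset.mem_range]
      obtain ⟨⟨h1, h2⟩, h3⟩ := hi
      have h4 := h3 h1
      push_cast at h2
      omega
    have h1 := Finset.card_sdiff_add_card_eq_card hsub
    have h2 : (diagB L (n + 1) \ diagB L n).card ≤ 1 :=
      le_trans (Finset.card_le_card hdiff) (card_diag_eq_le_one L hanti _)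
    have h3 : (diagB L (n + 1)).card ≤ k := by
      rw [diagB]
      exact le_trans (Finset.card_filter_le _ _) (le_of_eq (Finset.card_range k))
    have h4 := key n
    have h5 := key (n + 1)
    have hcast : (-(n : ℤ) - 1) = -((n + 1 : ℕ) : ℤ) := by push_cast; ring
    rw [hcast]
    omega

lemma sum_range_getD (L : List ℕ) : ∑ i ∈ Finset.range L.length, L.getD i 0 = L.sum := by
  induction L with
  | nil => simp
  | cons a l ih =>
    rw [List.length_cons, Finset.sum_range_succ']
    simp only [List.getD_cons_succ, List.getD_cons_zero, ih, List.sum_cons]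
    omega

lemma aux_sum (L : List ℕ)
    (hpos : ∀ i : ℕ, i < L.length → 1 ≤ L.getD i 0) :
    (∑ᶠ n : ℤ, (diagA L n).card) = L.sum := by
  classical
  set k := L.length with hk
  have hrepr : ∀ n : ℤ, (diagA L n).card = ∑ i ∈ Finset.range k,
      (if 1 ≤ n + ((i : ℤ) + 1) ∧ n + ((i : ℤ) + 1) ≤ ((L.getD i 0 : ℕ) : ℤ) then 1 else 0) := by
    intro n
    rw [diagA, Finset.card_filter]
  have hsupp : ∀ i : ℕ, (Function.support fun n : ℤ =>
      (if 1 ≤ n + ((i : ℤ) + 1) ∧ n + ((i : ℤ) + 1) ≤ ((L.getD i 0 : ℕ) : ℤ) then 1 else 0)) ⊆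
      ↑(Finset.Ico (-(i : ℤ)) (((L.getD i 0 : ℕ) : ℤ) - i)) := by
    intro i n hn
    simp only [Function.support, Set.mem_setOf_eq, ne_eq, ite_eq_right_iff, not_forall] at hn
    obtain ⟨⟨h1, h2⟩, -⟩ := hn
    simp only [Finset.coe_Ico, Set.mem_Ico]
    omega
  calc (∑ᶠ n : ℤ, (diagA L n).card)
      = ∑ᶠ n : ℤ, ∑ i ∈ Finset.range k,
          (if 1 ≤ n + ((i : ℤ) + 1) ∧ n + ((i : ℤ) + 1) ≤ ((L.getD i 0 : ℕ) : ℤ) then 1 else 0) := by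
        exact finsum_congr hrepr
    _ = ∑ i ∈ Finset.range k, ∑ᶠ n : ℤ,
          (if 1 ≤ n + ((i : ℤ) + 1) ∧ n + ((i : ℤ) + 1) ≤ ((L.getD i 0 : ℕ) : ℤ) then 1 else 0) := by
        refine finsum_sum_comm _ _ (fun i _ => ?_)
        exact Set.Finite.subset (Finset.finite_toSet _) (hsupp i)
    _ = ∑ i ∈ Finset.range k, L.getD i 0 := by
        refine Finset.sum_congr rfl (fun i hi => ?_)
        rw [finsum_eq_sum_of_support_subset _ (hsupp i)]
        rw [Finset.sum_congr rfl (fun n hn => ?_), Finset.sum_const, smul_eq_mul, mul_one,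
          Int.card_Ico]
        · omega
        · rw [Finset.mem_Ico] at hn
          rw [if_pos]
          omega
    _ = L.sum := sum_range_getD L

end Aux

lemma parts_facts {a : ℕ} (P : Nat.Partition a) :
    (∀ i : ℕ, i < (P.parts.sort (· ≤ ·)).reverse.length →
      1 ≤ (P.parts.sort (· ≤ ·)).reverse.getD i 0) ∧
    (∀ i j : ℕ, i ≤ j → j < (P.parts.sort (· ≤ ·)).reverse.length →
      (P.parts.sort (· ≤ ·)).reverse.getD j 0 ≤ (P.parts.sort (· ≤ ·)).reverse.getD i 0) ∧
    (P.parts.sort (· ≤ ·)).reverse.sum = a := by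
  set L := (P.parts.sort (· ≤ ·)).reverse with hL
  have hmem : ∀ i : ℕ, (h : i < L.length) → L.getD i 0 ∈ P.parts := by
    intro i h
    have hx : L.getD i 0 ∈ L := by
      rw [List.getD_eq_getElem L 0 h]
      exact List.getElem_mem h
    rw [hL, List.mem_reverse, Multiset.mem_sort] at hx
    exact hx
  have hsorted : L.Pairwise (· ≥ ·) := by
    rw [hL, List.pairwise_reverse]
    exact Multiset.pairwise_sort P.parts (· ≤ ·)
  refine ⟨fun i h => P.parts_pos (hmem i h), ?_, ?_⟩
  · intro i j hij hj
    rcases eq_or_lt_of_le hij with rfl | hlt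
    · exact le_refl _
    · have hi : i < L.length := lt_trans hlt hj
      rw [List.getD_eq_getElem L 0 hj, List.getD_eq_getElem L 0 hi]
      exact List.pairwise_iff_get.1 hsorted ⟨i, hi⟩ ⟨j, hj⟩ hlt
  · rw [hL, List.sum_reverse]
    have : ((P.parts.sort (· ≤ ·) : List ℕ) : Multiset ℕ).sum = P.parts.sum := by
      rw [Multiset.sort_eq]
    rw [Multiset.sum_coe] at this
    rw [this, P.parts_sum]

/-- The diagonal-length sequence of a partition of `a` is 1-admissible with
total sum `a`. -/
theorem diagSeq_one_admissible {a : ℕ} (P : Nat.Partition a) :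
    IsOneAdmissible (diagSeq P) ∧ (∑ᶠ n : ℤ, diagSeq P n) = a := by
  obtain ⟨hpos, hanti, hsum⟩ := parts_facts P
  have h1 : diagSeq P = fun n => (diagA (P.parts.sort (· ≤ ·)).reverse n).card := rfl
  rw [h1]
  exact ⟨aux_admissible _ hpos hanti, by rw [aux_sum _ hpos, hsum]⟩
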